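/- Let Σ be a symmetric positive definite p×p real matrix and B a symmetric positive semidefinite p×p matrix with B ⪯ 2Σ (i.e., 2Σ − B is positive semidefinite). Then the matrix 2B − BΣ⁻¹B is positive semidefinite. -/

import Mathlib

open Matrix in
/-- If `Σ ≻ 0`, `B ⪰ 0` and `B ⪯ 2Σ`, then `2B − BΣ⁻¹B ⪰ 0`. -/
theorem two_B_sub_B_inv_B_posSemidef (p : ℕ) (Sig B : Matrix (Fin p) (Fin p) ℝ)
    (hSig : Sig.PosDef) (hB : B.PosSemidef) (h2 : (2 • Sig - B).PosSemidef) :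
    (2 • B - B * Sig⁻¹ * B).PosSemidef := by
  have hdet : IsUnit Sig.det := hSig.det_pos.ne'.isUnit
  have hmul : Sig * Sig⁻¹ = 1 := Matrix.mul_nonsing_inv _ hdet
  have hSinvH : Sig⁻¹.IsHermitian := hSig.1.inv
  have hBh : B.IsHermitian := hB.1
  refine Matrix.posSemidef_iff_dotProduct_mulVec.mpr ⟨?_, ?_⟩
  · show (2 • B - B * Sig⁻¹ * B).conjTranspose = 2 • B - B * Sig⁻¹ * B
    rw [Matrix.conjTranspose_sub, Matrix.conjTranspose_smul, Matrix.conjTranspose_mul,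
      Matrix.conjTranspose_mul, hBh.eq, hSinvH.eq, Matrix.mul_assoc]
    simp [Matrix.mul_assoc]
  · intro x
    set z := B *ᵥ x with hz
    set w := Sig⁻¹ *ᵥ z with hw
    have hSw : Sig *ᵥ w = z := by
      rw [hw, Matrix.mulVec_mulVec, hmul, Matrix.one_mulVec]
    set c := x ⬝ᵥ z with hcdef
    set t := w ⬝ᵥ z with htdef
    set a := w ⬝ᵥ (B *ᵥ w) with hadef
    have hc : 0 ≤ c := by simpa using hB.dotProduct_mulVec_nonneg x
    have hBsymm : B.transpose = B := by
      simpa [Matrix.conjTranspose_eq_transpose_of_trivial] using hBh.eq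
    have hxBw : x ⬝ᵥ (B *ᵥ w) = t := by
      rw [Matrix.dotProduct_mulVec, ← hBsymm, Matrix.vecMul_transpose,
        dotProduct_comm, htdef, hz]
    have ht0 : 0 ≤ t := by
      have := hSig.posSemidef.dotProduct_mulVec_nonneg w
      rwa [hSw, star_trivial, ← htdef] at this
    have hta : a ≤ 2 * t := by
      have := h2.dotProduct_mulVec_nonneg w
      rw [star_trivial, Matrix.sub_mulVec, Matrix.smul_mulVec, hSw,
        dotProduct_sub, dotProduct_smul, ← htdef, ← hadef] at this
      simpa [two_mul] using sub_nonneg.mp this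
    have hquad : ∀ r : ℝ, 0 ≤ c * (r * r) + 2 * t * r + a := by
      intro r
      have h0 := hB.dotProduct_mulVec_nonneg (w + r • x)
      rw [star_trivial] at h0
      simp only [Matrix.mulVec_add, Matrix.mulVec_smul, Matrix.smul_mulVec,
        dotProduct_add, add_dotProduct, smul_dotProduct,
        dotProduct_smul, smul_eq_mul] at h0
      have hwz : w ⬝ᵥ (B *ᵥ x) = t := by rw [← hz, htdef]
      have hxBx : x ⬝ᵥ (B *ᵥ x) = c := by rw [← hz, hcdef]
      rw [hxBw, hwz, hxBx, ← hadef] at h0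
      nlinarith [h0]
    have hcs : t * t ≤ c * a := by
      have hd := discrim_le_zero hquad
      rw [discrim] at hd
      nlinarith [hd]
    have hkey : t ≤ 2 * c := by
      rcases lt_or_eq_of_le ht0 with htpos | hteq
      · nlinarith [mul_le_mul_of_nonneg_left hta hc]
      · nlinarith
    -- now compute the goal
    have hgoal : x ⬝ᵥ ((2 • B - B * Sig⁻¹ * B) *ᵥ x) = 2 * c - t := by
      rw [Matrix.sub_mulVec, Matrix.smul_mulVec, dotProduct_sub,
        dotProduct_smul]
      have : (B * Sig⁻¹ * B) *ᵥ x = B *ᵥ w := by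
        rw [hw, hz, Matrix.mulVec_mulVec, Matrix.mulVec_mulVec]
      rw [this, hxBw, ← hz, ← hcdef]
      simp [two_mul]
    rw [star_trivial, hgoal]
    linarith
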